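/- Let A¹, …, A^T be strategy profiles for a finite set L of links and let ε ≥ 0. If a link u has regret at most ε over A¹, …, A^T and q_u < 1/2 − ε, then f_u ≥ 1/4, where f_u is the fraction of rounds t in which u would have failed had it transmitted (i.e., utility_u(A^t ⊕_u 1) = −1). -/

import Mathlib

open Finset

/-- A communication link: a sender–receiver pair of distinct points of a metric space. -/
structure Link (X : Type*) [MetricSpace X] where
  s : X
  r : X
  hne : s ≠ r

namespace Link
variable {X : Type*} [MetricSpace X]

/-- The length `ℓ_v = d(s_v, r_v)` of a link. -/
noncomputable def len (v : Link X) : ℝ := dist v.s v.r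

/-- `dd u v = d_{uv} = d(s_u, r_v)`. -/
noncomputable def dd (u v : Link X) : ℝ := dist u.s v.r

end Link

open Classical in
/-- Affectance of link `v` caused by link `u` under power assignment `P`
(zero ambient noise): `min {1, β (P_u/P_v) (ℓ_v/d_{uv})^α}`, and `0` if `u = v`. -/
noncomputable def aff {X : Type*} [MetricSpace X] (α β : ℝ) (P : Link X → ℝ)
    (u v : Link X) : ℝ :=
  if u = v then 0 else min 1 (β * (P u / P v) * (v.len / Link.dd u v) ^ α)

/-- Affectance under uniform power (all powers equal to `1`). -/
noncomputable def affU {X : Type*} [MetricSpace X] (α β : ℝ) (u v : Link X) : ℝ :=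
  aff α β (fun _ => 1) u v

open Classical in
/-- Utility of link `v` among the players `L` at strategy profile `A`:
`1` for a successful transmission, `-1` for a failed one, `0` for staying silent. -/
noncomputable def utility {X : Type*} [MetricSpace X] (α β : ℝ) (L : Finset (Link X))
    (A : Link X → Bool) (v : Link X) : ℝ :=
  if A v then
    (if ∑ u ∈ L.filter (fun u => A u = true), affU α β u v ≤ 1 then 1 else -1)
  else 0

open Classical in
/-- `A ⊕_v b`: the profile `A` with `v`'s action replaced by `b`. -/
noncomputable def updAction {X : Type*} [MetricSpace X] (A : Link X → Bool)
    (v : Link X) (b : Bool) : Link X → Bool :=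
  Function.update A v b

/-- The regret of link `v` over the strategy profiles `A 1, …, A T`. -/
noncomputable def regret {X : Type*} [MetricSpace X] (α β : ℝ) (L : Finset (Link X))
    (T : ℕ) (A : Fin T → Link X → Bool) (v : Link X) : ℝ :=
  max ((1 / T : ℝ) * ∑ t : Fin T, utility α β L (updAction (A t) v true) v)
      ((1 / T : ℝ) * ∑ t : Fin T, utility α β L (updAction (A t) v false) v)
    - (1 / T : ℝ) * ∑ t : Fin T, utility α β L (A t) v

/-- `q_v`: the fraction of rounds in which `v` transmits. -/
noncomputable def qfrac {X : Type*} [MetricSpace X]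
    (T : ℕ) (A : Fin T → Link X → Bool) (v : Link X) : ℝ :=
  ((Finset.univ.filter (fun t : Fin T => A t v = true)).card : ℝ) / T

open Classical in
/-- `x_v`: the fraction of rounds in which `v` transmits successfully. -/
noncomputable def xfrac {X : Type*} [MetricSpace X] (α β : ℝ) (L : Finset (Link X))
    (T : ℕ) (A : Fin T → Link X → Bool) (v : Link X) : ℝ :=
  ((Finset.univ.filter (fun t : Fin T => A t v = true ∧
      ∑ u ∈ L.filter (fun u => A t u = true), affU α β u v ≤ 1)).card : ℝ) / T

open Classical in
/-- `f_v`: the fraction of rounds in which `v` would have failed had it transmitted. -/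
noncomputable def ffrac {X : Type*} [MetricSpace X] (α β : ℝ) (L : Finset (Link X))
    (T : ℕ) (A : Fin T → Link X → Bool) (v : Link X) : ℝ :=
  ((Finset.univ.filter
      (fun t : Fin T => utility α β L (updAction (A t) v true) v = -1)).card : ℝ) / T

/-- a link with regret at most `ε` which transmits in fewer than a
`1/2 - ε` fraction of the rounds must fail in at least a quarter of the rounds
(had it transmitted). -/
theorem low_transmit_implies_often_fail {X : Type*} [MetricSpace X] (α β : ℝ)
    (hα : 0 < α) (hβ : 1 ≤ β)
    (L : Finset (Link X)) (T : ℕ) (hT : 0 < T)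
    (A : Fin T → Link X → Bool) (ε : ℝ) (hε : 0 ≤ ε)
    (u : Link X) (hu : u ∈ L)
    (hreg : regret α β L T A u ≤ ε)
    (hq : qfrac T A u < 1 / 2 - ε) :
    1 / 4 ≤ ffrac α β L T A u := by
  classical
  have hT' : (0:ℝ) < T := by exact_mod_cast hT
  set g : Fin T → ℝ := fun t => utility α β L (updAction (A t) u true) u with hgdef
  have hg : ∀ t : Fin T, g t = 1 ∨ g t = -1 := by
    intro t
    simp only [hgdef, utility, updAction, Function.update_self]
    split
    · split_ifs
      · left; simp [*]
      · right; simp [*]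
    · simp at *
  set F := Finset.univ.filter (fun t : Fin T => g t = -1) with hF
  set Fc := Finset.univ.filter (fun t : Fin T => ¬ g t = -1) with hFc
  have hcard : F.card + Fc.card = T := by
    rw [hF, hFc, Finset.card_filter_add_card_filter_not]
    simp
  have hsum1 : ∑ t : Fin T, g t = (T : ℝ) - 2 * F.card := by
    rw [← Finset.sum_filter_add_sum_filter_not Finset.univ (fun t => g t = -1)]
    have h1 : ∑ t ∈ F, g t = -(F.card : ℝ) := by
      rw [Finset.sum_congr rfl (fun t ht => (Finset.mem_filter.1 ht).2)]
      simp [hF]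
    have h2 : ∑ t ∈ Fc, g t = (Fc.card : ℝ) := by
      rw [Finset.sum_congr rfl (fun t ht => ?_), Finset.sum_const, nsmul_eq_mul, mul_one]
      rcases hg t with h | h
      · exact h
      · exact absurd h (Finset.mem_filter.1 ht).2
    rw [show (Finset.univ.filter (fun t => ¬ g t = -1)) = Fc from rfl, h1, h2]
    have : (Fc.card : ℝ) = (T : ℝ) - F.card := by
      have := hcard
      push_cast [← this]
      ring
    rw [this]; ring
  have hsum0 : ∑ t : Fin T, utility α β L (A t) u ≤
      ((Finset.univ.filter (fun t : Fin T => A t u = true)).card : ℝ) := by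
    have : ((Finset.univ.filter (fun t : Fin T => A t u = true)).card : ℝ)
        = ∑ t : Fin T, (if A t u = true then (1:ℝ) else 0) := by
      rw [Finset.sum_boole]
    rw [this]
    apply Finset.sum_le_sum
    intro t _
    simp only [utility]
    by_cases h : A t u = true
    · simp only [h, if_true]
      split
      · norm_num
      · norm_num
    · simp only [h]
      simp at h
      simp [h]
  -- regret lower bound
  have hreg' : (1 / T : ℝ) * ((T:ℝ) - 2 * F.card)
      - (1 / T : ℝ) * ((Finset.univ.filter (fun t : Fin T => A t u = true)).card : ℝ)
      ≤ regret α β L T A u := by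
    unfold regret
    have h1 : (1 / T : ℝ) * ((T:ℝ) - 2 * F.card)
        ≤ max ((1 / T : ℝ) * ∑ t : Fin T, utility α β L (updAction (A t) u true) u)
            ((1 / T : ℝ) * ∑ t : Fin T, utility α β L (updAction (A t) u false) u) := by
      rw [← hsum1]
      exact le_max_left _ _
    have h2 : (1 / T : ℝ) * ∑ t : Fin T, utility α β L (A t) u
        ≤ (1 / T : ℝ) * ((Finset.univ.filter (fun t : Fin T => A t u = true)).card : ℝ) := by
      apply mul_le_mul_of_nonneg_left hsum0
      positivity
    linarith
  have hffrac : ffrac α β L T A u = (F.card : ℝ) / T := rfl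
  have hqfrac : qfrac T A u
      = ((Finset.univ.filter (fun t : Fin T => A t u = true)).card : ℝ) / T := rfl
  set n : ℝ := (F.card : ℝ)
  set m : ℝ := ((Finset.univ.filter (fun t : Fin T => A t u = true)).card : ℝ)
  have key : 1 - 2 * (n / T) - m / T ≤ ε := by
    have : (1 / T : ℝ) * ((T:ℝ) - 2 * n) - (1 / T : ℝ) * m
        = 1 - 2 * (n / T) - m / T := by
      field_simp
    linarith [hreg'.trans hreg]
  rw [hffrac]
  rw [hqfrac] at hq
  linarith
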